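/- The class of languages recognized by data automata with suffix-closed class automata (sDA) is closed under intersection: given two sDA D_1 and D_2, there is an sDA D with L(D) = L(D_1) ∩ L(D_2). -/

import Mathlib

/-- A data automaton over alphabet `Σ`, intermediate alphabet `Γ` and data
domain `Δ`, with base (transducer) states `Q` and class automaton states `S`. -/
structure DA (Sig Γ Δ : Type) (Q S : Type) where
  baseStep : Q → Sig → Set (Γ × Q)
  baseStart : Set Q
  baseAccept : Set Q
  classStep : S → Γ → Set S
  classStart : Set S
  classAccept : Set S

/-- An accepting run of the base transducer from state `q`, reading the input
word and producing the output word. -/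
def DA.BaseRun {Sig Γ Δ Q S : Type} (D : DA Sig Γ Δ Q S) :
    Q → List Sig → List Γ → Prop
  | q, [], [] => q ∈ D.baseAccept
  | q, a :: as, g :: gs => ∃ q', (g, q') ∈ D.baseStep q a ∧ D.BaseRun q' as gs
  | _, _, _ => False

/-- An accepting run of the class automaton from state `s` on a word. -/
def DA.ClassAccept {Sig Γ Δ Q S : Type} (D : DA Sig Γ Δ Q S) :
    S → List Γ → Prop
  | s, [] => s ∈ D.classAccept
  | s, g :: gs => ∃ s', s' ∈ D.classStep s g ∧ D.ClassAccept s' gs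

/-- The class string of data value `d`: the subsequence of the output `γ` at
the positions of `w` carrying data value `d`. -/
def classString {Sig Γ Δ : Type} [DecidableEq Δ]
    (γ : List Γ) (w : List (Sig × Δ)) (d : Δ) : List Γ :=
  ((γ.zip w).filter (fun p => p.2.2 = d)).map Prod.fst

/-- Acceptance of a data word by a data automaton: some accepting run of the
base transducer produces an output such that, for every data value occurring in
the word, the corresponding class string is accepted by the class automaton. -/
def DA.Accepts {Sig Γ Δ Q S : Type} [DecidableEq Δ] (D : DA Sig Γ Δ Q S)
    (w : List (Sig × Δ)) : Prop :=
  ∃ γ : List Γ, γ.length = w.length ∧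
    (∃ q ∈ D.baseStart, D.BaseRun q (w.map Prod.fst) γ) ∧
    ∀ d : Δ, (∃ p ∈ w, p.2 = d) →
      ∃ s ∈ D.classStart, D.ClassAccept s (classString γ w d)

/-- A data automaton is suffix-closed (an sDA) if all class states are initial. -/
def DA.IsSuffixClosed {Sig Γ Δ Q S : Type} (D : DA Sig Γ Δ Q S) : Prop :=
  D.classStart = Set.univ

section Aux

variable {Sig Γ₁ Γ₂ Δ Q₁ S₁ Q₂ S₂ : Type}

/-- Product data automaton. -/
def prodDA (D₁ : DA Sig Γ₁ Δ Q₁ S₁) (D₂ : DA Sig Γ₂ Δ Q₂ S₂) :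
    DA Sig (Γ₁ × Γ₂) Δ (Q₁ × Q₂) (S₁ × S₂) where
  baseStep q a := {gp | (gp.1.1, gp.2.1) ∈ D₁.baseStep q.1 a ∧
                        (gp.1.2, gp.2.2) ∈ D₂.baseStep q.2 a}
  baseStart := D₁.baseStart ×ˢ D₂.baseStart
  baseAccept := D₁.baseAccept ×ˢ D₂.baseAccept
  classStep s g := D₁.classStep s.1 g.1 ×ˢ D₂.classStep s.2 g.2
  classStart := Set.univ
  classAccept := D₁.classAccept ×ˢ D₂.classAccept

lemma prod_baseRun_iff (D₁ : DA Sig Γ₁ Δ Q₁ S₁) (D₂ : DA Sig Γ₂ Δ Q₂ S₂) :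
    ∀ (as : List Sig) (γ : List (Γ₁ × Γ₂)) (q : Q₁ × Q₂),
      (prodDA D₁ D₂).BaseRun q as γ ↔
        D₁.BaseRun q.1 as (γ.map Prod.fst) ∧ D₂.BaseRun q.2 as (γ.map Prod.snd)
  | [], [], q => by
      simp [DA.BaseRun, prodDA, Set.mem_prod]
  | [], g :: gs, q => by simp [DA.BaseRun]
  | a :: as, [], q => by simp [DA.BaseRun]
  | a :: as, g :: gs, q => by
      simp only [DA.BaseRun, List.map_cons]
      constructor
      · rintro ⟨q', ⟨h1, h2⟩, hr⟩
        rw [prod_baseRun_iff] at hr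
        exact ⟨⟨q'.1, h1, hr.1⟩, ⟨q'.2, h2, hr.2⟩⟩
      · rintro ⟨⟨q₁', h1, hr1⟩, ⟨q₂', h2, hr2⟩⟩
        exact ⟨(q₁', q₂'), ⟨h1, h2⟩, (prod_baseRun_iff D₁ D₂ as gs _).2 ⟨hr1, hr2⟩⟩

lemma prod_classAccept_iff (D₁ : DA Sig Γ₁ Δ Q₁ S₁) (D₂ : DA Sig Γ₂ Δ Q₂ S₂) :
    ∀ (gs : List (Γ₁ × Γ₂)) (s : S₁ × S₂),
      (prodDA D₁ D₂).ClassAccept s gs ↔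
        D₁.ClassAccept s.1 (gs.map Prod.fst) ∧ D₂.ClassAccept s.2 (gs.map Prod.snd)
  | [], s => by simp [DA.ClassAccept, prodDA, Set.mem_prod]
  | g :: gs, s => by
      simp only [DA.ClassAccept, List.map_cons]
      constructor
      · rintro ⟨s', ⟨h1, h2⟩, hr⟩
        rw [prod_classAccept_iff] at hr
        exact ⟨⟨s'.1, h1, hr.1⟩, ⟨s'.2, h2, hr.2⟩⟩
      · rintro ⟨⟨s₁', h1, hr1⟩, ⟨s₂', h2, hr2⟩⟩
        exact ⟨(s₁', s₂'), ⟨h1, h2⟩, (prod_classAccept_iff D₁ D₂ gs _).2 ⟨hr1, hr2⟩⟩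

lemma baseRun_length {Γ Q S : Type} (D : DA Sig Γ Δ Q S) :
    ∀ (as : List Sig) (γ : List Γ) (q : Q), D.BaseRun q as γ → γ.length = as.length
  | [], [], q, _ => rfl
  | [], g :: gs, q, h => absurd h (by simp [DA.BaseRun])
  | a :: as, [], q, h => absurd h (by simp [DA.BaseRun])
  | a :: as, g :: gs, q, h => by
      obtain ⟨q', _, hr⟩ := h
      simpa using baseRun_length D as gs q' hr

lemma classString_map {Γ Γ' : Type} [DecidableEq Δ] (f : Γ → Γ')
    (γ : List Γ) (w : List (Sig × Δ)) (d : Δ) :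
    classString (γ.map f) w d = (classString γ w d).map f := by
  induction γ generalizing w with
  | nil => simp [classString]
  | cons g gs ih =>
    cases w with
    | nil => simp [classString]
    | cons p ps =>
      simp only [classString, List.map_cons, List.zip_cons_cons, List.filter_cons]
      have := ih ps
      simp only [classString] at this
      by_cases h : p.2 = d <;> simp [h, this]

end Aux

/-- The class of languages recognized by suffix-closed data automata is closed
under intersection. -/
theorem sDA_inter {Sig Γ₁ Γ₂ Δ Q₁ S₁ Q₂ S₂ : Type} [DecidableEq Δ]
    (D₁ : DA Sig Γ₁ Δ Q₁ S₁) (D₂ : DA Sig Γ₂ Δ Q₂ S₂)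
    (h₁ : D₁.IsSuffixClosed) (h₂ : D₂.IsSuffixClosed) :
    ∃ (Γ Q S : Type) (D : DA Sig Γ Δ Q S), D.IsSuffixClosed ∧
      {w | D.Accepts w} = {w | D₁.Accepts w} ∩ {w | D₂.Accepts w} := by
  refine ⟨Γ₁ × Γ₂, Q₁ × Q₂, S₁ × S₂, prodDA D₁ D₂, rfl, ?_⟩
  ext w
  constructor
  · rintro ⟨γ, hlen, ⟨q, hq, hrun⟩, hcls⟩
    rw [prod_baseRun_iff] at hrun
    constructor
    · refine ⟨γ.map Prod.fst, by simpa using hlen, ⟨q.1, hq.1, hrun.1⟩, ?_⟩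
      intro d hd
      obtain ⟨s, -, hs⟩ := hcls d hd
      rw [prod_classAccept_iff] at hs
      exact ⟨s.1, by rw [h₁]; trivial, by rw [classString_map]; exact hs.1⟩
    · refine ⟨γ.map Prod.snd, by simpa using hlen, ⟨q.2, hq.2, hrun.2⟩, ?_⟩
      intro d hd
      obtain ⟨s, -, hs⟩ := hcls d hd
      rw [prod_classAccept_iff] at hs
      exact ⟨s.2, by rw [h₂]; trivial, by rw [classString_map]; exact hs.2⟩
  · rintro ⟨⟨γ₁, hlen₁, ⟨q₁, hq₁, hrun₁⟩, hcls₁⟩, ⟨γ₂, hlen₂, ⟨q₂, hq₂, hrun₂⟩, hcls₂⟩⟩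
    have hl12 : γ₁.length = γ₂.length := by rw [hlen₁, hlen₂]
    have hfst : (γ₁.zip γ₂).map Prod.fst = γ₁ := List.map_fst_zip (le_of_eq hl12)
    have hsnd : (γ₁.zip γ₂).map Prod.snd = γ₂ := List.map_snd_zip (le_of_eq hl12.symm)
    refine ⟨γ₁.zip γ₂, by simp [List.length_zip, hlen₁, hlen₂], ?_, ?_⟩
    · exact ⟨(q₁, q₂), ⟨hq₁, hq₂⟩,
        (prod_baseRun_iff D₁ D₂ _ _ _).2 ⟨by rwa [hfst], by rwa [hsnd]⟩⟩
    · intro d hd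
      obtain ⟨s₁, -, hs₁⟩ := hcls₁ d hd
      obtain ⟨s₂, -, hs₂⟩ := hcls₂ d hd
      refine ⟨(s₁, s₂), trivial, (prod_classAccept_iff D₁ D₂ _ _).2 ⟨?_, ?_⟩⟩
      · rw [← classString_map Prod.fst, hfst]; exact hs₁
      · rw [← classString_map Prod.snd, hsnd]; exact hs₂
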